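/- In a deterministic MDP, the operator (Ĝ Q)(s₀,a₀) = max_{π∈Π̂} max_{τ∼π} max_{1≤n≤N} [ Σ_{t=0}^{n-1} γ^t r(s_t,a_t) + γ^n max_{a'} Q(s_n,a') ] is a γ-contraction in sup norm and its unique fixed point is Q*. -/

import Mathlib

open Finset Filter Topology

/-- Deterministic Bellman optimality operator for a deterministic MDP with transition f. -/
noncomputable def dbOpt {S A : Type*} [Fintype A] [Nonempty A]
    (f : S × A → S) (r : S × A → ℝ) (γ : ℝ) (Q : S × A → ℝ) : S × A → ℝ :=
  fun p => r p + γ * univ.sup' univ_nonempty fun a' => Q (f p, a')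

/-- Deterministic Bellman expectation operator for a deterministic policy π. -/
def dbExp {S A : Type*} (f : S × A → S) (r : S × A → ℝ) (γ : ℝ)
    (π : S → A) (Q : S × A → ℝ) : S × A → ℝ :=
  fun p => r p + γ * Q (f p, π (f p))

/-- Greedy Multi-Step operator for a deterministic MDP:
    Ĝ Q = max_{π ∈ Π̂} max_{1 ≤ n ≤ N} (B^π)^{n-1} B Q (componentwise). -/
noncomputable def dgOp {S A : Type*} [Fintype A] [Nonempty A]
    (f : S × A → S) (r : S × A → ℝ) (γ : ℝ)
    {ι : Type*} [Fintype ι] [Nonempty ι] (pol : ι → S → A)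
    (N : ℕ) (hN : 1 ≤ N) (Q : S × A → ℝ) : S × A → ℝ :=
  fun p => univ.sup' univ_nonempty fun i =>
    (Icc 1 N).sup' (nonempty_Icc.mpr hN) fun n =>
      ((dbExp f r γ (pol i))^[n - 1] (dbOpt f r γ Q)) p

lemma my_abs_sup'_sub_sup'_le {α : Type*} (s : Finset α) (hs : s.Nonempty)
    (g h : α → ℝ) (c : ℝ) (H : ∀ a ∈ s, |g a - h a| ≤ c) :
    |s.sup' hs g - s.sup' hs h| ≤ c := by
  have hg : s.sup' hs g ≤ s.sup' hs h + c := by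
    apply Finset.sup'_le
    intro a ha
    have h1 : g a ≤ h a + c := by
      have := (abs_sub_le_iff.mp (H a ha)).1; linarith
    exact h1.trans (add_le_add_left (Finset.le_sup' h ha) c)
  have hh : s.sup' hs h ≤ s.sup' hs g + c := by
    apply Finset.sup'_le
    intro a ha
    have h1 : h a ≤ g a + c := by
      have := (abs_sub_le_iff.mp (H a ha)).2; linarith
    exact h1.trans (add_le_add_left (Finset.le_sup' g ha) c)
  rw [abs_sub_le_iff]
  constructor <;> linarith

lemma dbExp_iterate_bound {S A : Type*}
    (f : S × A → S) (r : S × A → ℝ) (γ : ℝ) (hγ0 : 0 < γ) (π : S → A)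
    (k : ℕ) (u v : S × A → ℝ) (c : ℝ)
    (H : ∀ p, |u p - v p| ≤ c) :
    ∀ p, |((dbExp f r γ π)^[k] u) p - ((dbExp f r γ π)^[k] v) p| ≤ γ ^ k * c := by
  induction k with
  | zero => simpa using H
  | succ k ih =>
    intro p
    rw [Function.iterate_succ_apply', Function.iterate_succ_apply']
    have : dbExp f r γ π ((dbExp f r γ π)^[k] u) p -
        dbExp f r γ π ((dbExp f r γ π)^[k] v) p =
        γ * (((dbExp f r γ π)^[k] u) (f p, π (f p)) -
             ((dbExp f r γ π)^[k] v) (f p, π (f p))) := by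
      simp [dbExp]; ring
    rw [this, abs_mul, abs_of_pos hγ0, pow_succ]
    calc γ * |((dbExp f r γ π)^[k] u) (f p, π (f p)) -
             ((dbExp f r γ π)^[k] v) (f p, π (f p))|
        ≤ γ * (γ ^ k * c) := by
          exact mul_le_mul_of_nonneg_left (ih _) hγ0.le
      _ = γ ^ k * γ * c := by ring

lemma dbOpt_bound {S A : Type*} [Fintype S] [Fintype A] [Nonempty A]
    (f : S × A → S) (r : S × A → ℝ) (γ : ℝ) (hγ0 : 0 < γ)
    (q q' : S × A → ℝ) (p : S × A) :
    |dbOpt f r γ q p - dbOpt f r γ q' p| ≤ γ * ‖q - q'‖ := by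
  have : dbOpt f r γ q p - dbOpt f r γ q' p =
      γ * ((univ.sup' univ_nonempty fun a' => q (f p, a')) -
           (univ.sup' univ_nonempty fun a' => q' (f p, a'))) := by
    simp [dbOpt]; ring
  rw [this, abs_mul, abs_of_pos hγ0]
  apply mul_le_mul_of_nonneg_left _ hγ0.le
  apply my_abs_sup'_sub_sup'_le
  intro a _
  have := norm_le_pi_norm (q - q') (f p, a)
  simpa [Real.norm_eq_abs] using this

/-- in a deterministic MDP, the greedy multi-step operator Ĝ is a
    γ-contraction in sup norm and its unique fixed point is Q*. -/
theorem det_greedy_multistep_contraction_and_fixed_point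
    {S A : Type*} [Fintype S] [Fintype A] [Nonempty S] [Nonempty A]
    (f : S × A → S) (r : S × A → ℝ) (γ : ℝ) (hγ0 : 0 < γ) (hγ1 : γ < 1)
    {ι : Type*} [Fintype ι] [Nonempty ι] (pol : ι → S → A)
    (N : ℕ) (hN : 1 ≤ N)
    (Qstar : S × A → ℝ) (hQ : dbOpt f r γ Qstar = Qstar) :
    (∀ q q' : S × A → ℝ,
        ‖dgOp f r γ pol N hN q - dgOp f r γ pol N hN q'‖ ≤ γ * ‖q - q'‖) ∧
      (∀ Q : S × A → ℝ, dgOp f r γ pol N hN Q = Q ↔ Q = Qstar) := by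
  -- contraction
  have contr : ∀ q q' : S × A → ℝ,
      ‖dgOp f r γ pol N hN q - dgOp f r γ pol N hN q'‖ ≤ γ * ‖q - q'‖ := by
    intro q q'
    have hc : (0:ℝ) ≤ γ * ‖q - q'‖ := mul_nonneg hγ0.le (norm_nonneg _)
    rw [pi_norm_le_iff_of_nonneg hc]
    intro p
    rw [Pi.sub_apply, Real.norm_eq_abs]
    unfold dgOp
    apply my_abs_sup'_sub_sup'_le
    intro i _
    apply my_abs_sup'_sub_sup'_le
    intro n hn
    have hn1 : 1 ≤ n := (Finset.mem_Icc.mp hn).1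
    have hbd := dbExp_iterate_bound f r γ hγ0 (pol i) (n-1)
      (dbOpt f r γ q) (dbOpt f r γ q') (γ * ‖q - q'‖)
      (dbOpt_bound f r γ hγ0 q q') p
    calc |((dbExp f r γ (pol i))^[n-1] (dbOpt f r γ q)) p -
          ((dbExp f r γ (pol i))^[n-1] (dbOpt f r γ q')) p|
        ≤ γ ^ (n-1) * (γ * ‖q - q'‖) := hbd
      _ ≤ 1 * (γ * ‖q - q'‖) := by
          apply mul_le_mul_of_nonneg_right _ (mul_nonneg hγ0.le (norm_nonneg _))
          exact pow_le_one₀ hγ0.le hγ1.le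
      _ = γ * ‖q - q'‖ := one_mul _
  -- Qstar is a fixed point
  have iter_le : ∀ (i : ι) (k : ℕ) (p : S × A),
      ((dbExp f r γ (pol i))^[k] Qstar) p ≤ Qstar p := by
    intro i k
    induction k with
    | zero => simp
    | succ k ih =>
      intro p
      rw [Function.iterate_succ_apply']
      have h1 : ((dbExp f r γ (pol i))^[k] Qstar) (f p, pol i (f p)) ≤
          Qstar (f p, pol i (f p)) := ih _
      have h2 : Qstar (f p, pol i (f p)) ≤
          univ.sup' univ_nonempty fun a' => Qstar (f p, a') :=
        Finset.le_sup' (fun a' => Qstar (f p, a')) (Finset.mem_univ (pol i (f p)))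
      have h3 : dbOpt f r γ Qstar p = Qstar p := by rw [hQ]
      simp only [dbExp]
      calc r p + γ * ((dbExp f r γ (pol i))^[k] Qstar) (f p, pol i (f p))
          ≤ r p + γ * (univ.sup' univ_nonempty fun a' => Qstar (f p, a')) := by
            apply add_le_add_right
            exact mul_le_mul_of_nonneg_left (h1.trans h2) hγ0.le
        _ = Qstar p := h3
  have hfix : dgOp f r γ pol N hN Qstar = Qstar := by
    funext p
    unfold dgOp
    apply le_antisymm
    · apply Finset.sup'_le
      intro i _
      apply Finset.sup'_le
      intro n _
      rw [hQ]
      exact iter_le i (n-1) p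
    · have h1 : (1:ℕ) ∈ Icc 1 N := Finset.mem_Icc.mpr ⟨le_refl _, hN⟩
      have hi : (Classical.arbitrary ι) ∈ (univ : Finset ι) := Finset.mem_univ _
      calc Qstar p = ((dbExp f r γ (pol (Classical.arbitrary ι)))^[1-1]
            (dbOpt f r γ Qstar)) p := by simp [hQ]
        _ ≤ (Icc 1 N).sup' (nonempty_Icc.mpr hN) (fun n =>
              ((dbExp f r γ (pol (Classical.arbitrary ι)))^[n - 1]
                (dbOpt f r γ Qstar)) p) := Finset.le_sup' (fun n => ((dbExp f r γ (pol (Classical.arbitrary ι)))^[n - 1]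
                (dbOpt f r γ Qstar)) p) h1
        _ ≤ _ := Finset.le_sup' (fun i : ι => (Icc 1 N).sup' (nonempty_Icc.mpr hN) fun n =>
              ((dbExp f r γ (pol i))^[n - 1] (dbOpt f r γ Qstar)) p) hi
  refine ⟨contr, fun Q => ⟨fun hfixQ => ?_, fun h => by rw [h]; exact hfix⟩⟩
  have key : ‖Q - Qstar‖ ≤ γ * ‖Q - Qstar‖ := by
    calc ‖Q - Qstar‖ = ‖dgOp f r γ pol N hN Q - dgOp f r γ pol N hN Qstar‖ := by
          rw [hfixQ, hfix]
      _ ≤ γ * ‖Q - Qstar‖ := contr Q Qstar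
  have hnn : (0:ℝ) ≤ ‖Q - Qstar‖ := norm_nonneg _
  have hz : ‖Q - Qstar‖ = 0 := by nlinarith
  have := norm_eq_zero.mp hz
  exact sub_eq_zero.mp this
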